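/- Let X be a finite nonempty alphabet of size N and let p be a probability distribution on X. Then H*(p) ≤ H*(U_N), where U_N is the uniform distribution on X, with equality if and only if p is uniform (p(x) = 1/N for all x). In particular, H* on distributions over X is maximized exactly at the uniform distribution. -/

import Mathlib

/-- Lin entropy of a distribution on a finite alphabet. -/
noncomputable def linEntropy {X : Type*} [Fintype X] (p : X → ℝ) : ℝ :=
  ∑ x, p x * ((1 / 2) * Real.logb 2 (4 * p x ^ p x / (p x + 1) ^ (p x + 1)))

/-- The single-letter Lin entropy function, rewritten with plain logs. -/
noncomputable def linG (t : ℝ) : ℝ :=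
  t + (t ^ 2 * Real.log t - (t ^ 2 + t) * Real.log (t + 1)) / (2 * Real.log 2)

/-- Derivative of `linG` (on `t > 0`). -/
noncomputable def linG1 (t : ℝ) : ℝ :=
  1 + (2 * t * Real.log t - (2 * t + 1) * Real.log (t + 1)) / (2 * Real.log 2)

/-- Second derivative of `linG` (on `t > 0`). -/
noncomputable def linG2 (t : ℝ) : ℝ :=
  (2 * Real.log t - 2 * Real.log (t + 1) + 1 / (t + 1)) / (2 * Real.log 2)

lemma log2_pos : (0 : ℝ) < Real.log 2 := Real.log_pos (by norm_num)

lemma linG_term_eq {t : ℝ} (ht : 0 ≤ t) :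
    t * ((1 / 2) * Real.logb 2 (4 * t ^ t / (t + 1) ^ (t + 1))) = linG t := by
  rcases eq_or_lt_of_le ht with h | h
  · simp [linG, ← h]
  · have h1 : (0 : ℝ) < t + 1 := by linarith
    have hlog : Real.log (4 * t ^ t / (t + 1) ^ (t + 1))
        = 2 * Real.log 2 + t * Real.log t - (t + 1) * Real.log (t + 1) := by
      rw [Real.log_div (by positivity) (by positivity),
        Real.log_mul (by norm_num) (by positivity), Real.log_rpow h, Real.log_rpow h1]
      have h4 : (4 : ℝ) = 2 ^ 2 := by norm_num
      rw [h4, Real.log_pow]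
      push_cast; ring
    rw [Real.logb, hlog, linG]
    field_simp
    ring

lemma hasDerivAt_linG {t : ℝ} (ht : 0 < t) : HasDerivAt linG (linG1 t) t := by
  have h1 : (0 : ℝ) < t + 1 := by linarith
  have d1 : HasDerivAt (fun s : ℝ => s ^ 2 * Real.log s) (2 * t * Real.log t + t) t := by
    have := (hasDerivAt_pow 2 t).mul (Real.hasDerivAt_log ht.ne')
    refine this.congr_deriv ?_
    field_simp; ring
  have dl : HasDerivAt (fun s : ℝ => Real.log (s + 1)) (1 / (t + 1)) t := by
    have := (Real.hasDerivAt_log h1.ne').comp t ((hasDerivAt_id t).add_const 1)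
    simpa [Function.comp_def] using this
  have d2 : HasDerivAt (fun s : ℝ => (s ^ 2 + s) * Real.log (s + 1))
      ((2 * t + 1) * Real.log (t + 1) + t) t := by
    have := ((hasDerivAt_pow 2 t).add (hasDerivAt_id t)).mul dl
    refine this.congr_deriv ?_
    simp only [Pi.add_apply, id_eq]
    field_simp; ring
  have := (hasDerivAt_id t).add ((d1.sub d2).div_const (2 * Real.log 2))
  refine this.congr_deriv ?_
  unfold linG1
  ring

lemma hasDerivAt_linG1 {t : ℝ} (ht : 0 < t) : HasDerivAt linG1 (linG2 t) t := by
  have h1 : (0 : ℝ) < t + 1 := by linarith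
  have d1 : HasDerivAt (fun s : ℝ => 2 * s * Real.log s) (2 * Real.log t + 2) t := by
    have := ((hasDerivAt_id t).const_mul 2).mul (Real.hasDerivAt_log ht.ne')
    refine this.congr_deriv ?_
    simp only [id_eq]
    field_simp
  have dl : HasDerivAt (fun s : ℝ => Real.log (s + 1)) (1 / (t + 1)) t := by
    have := (Real.hasDerivAt_log h1.ne').comp t ((hasDerivAt_id t).add_const 1)
    simpa [Function.comp_def] using this
  have d2 : HasDerivAt (fun s : ℝ => (2 * s + 1) * Real.log (s + 1))
      (2 * Real.log (t + 1) + (2 * t + 1) / (t + 1)) t := by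
    have := (((hasDerivAt_id t).const_mul 2).add_const 1).mul dl
    refine this.congr_deriv ?_
    simp only [id_eq]
    field_simp
  have := ((d1.sub d2).div_const (2 * Real.log 2)).const_add 1
  refine this.congr_deriv ?_
  unfold linG2
  have : 2 * Real.log t + 2 - (2 * Real.log (t + 1) + (2 * t + 1) / (t + 1))
      = 2 * Real.log t - 2 * Real.log (t + 1) + 1 / (t + 1) := by
    field_simp; ring
  rw [this]

lemma linG2_neg {t : ℝ} (h0 : 0 < t) (h1 : t ≤ 1) : linG2 t < 0 := by
  have hl2 : (0.6931471803 : ℝ) < Real.log 2 := Real.log_two_gt_d9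
  have h1' : (0 : ℝ) < t + 1 := by linarith
  have key : Real.log (t + 1) - Real.log t = Real.log ((t + 1) / t) :=
    (Real.log_div (by linarith) h0.ne').symm
  have h2 : (2 : ℝ) ≤ (t + 1) / t := by rw [le_div_iff₀ h0]; linarith
  have h3 : Real.log 2 ≤ Real.log ((t + 1) / t) :=
    Real.log_le_log (by norm_num) h2
  have h4 : 1 / (t + 1) ≤ 1 := by rw [div_le_one h1']; linarith
  have hnum : 2 * Real.log t - 2 * Real.log (t + 1) + 1 / (t + 1) < 0 := by linarith
  exact div_neg_of_neg_of_pos hnum (by linarith)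

lemma contOn_linG : ContinuousOn linG (Set.Icc 0 1) := by
  unfold linG
  refine continuousOn_id.add (ContinuousOn.div_const (ContinuousOn.sub ?_ ?_) _)
  · have : Continuous fun t : ℝ => t * (t * Real.log t) :=
      continuous_id.mul Real.continuous_mul_log
    exact this.continuousOn.congr fun x _ => by ring
  · refine ContinuousOn.mul (by fun_prop) ?_
    intro x hx
    have hx1 : x + 1 ≠ 0 := by simp at hx; linarith [hx.1]
    have h2 : ContinuousAt (Real.log ∘ fun y : ℝ => y + 1) x :=
      ContinuousAt.comp (Real.continuousAt_log hx1) (continuousAt_id.add continuousAt_const)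
    exact h2.continuousWithinAt

lemma contOn_linG1 : ContinuousOn linG1 (Set.Icc 0 1) := by
  unfold linG1
  refine continuousOn_const.add (ContinuousOn.div_const (ContinuousOn.sub ?_ ?_) _)
  · have : Continuous fun t : ℝ => 2 * (t * Real.log t) :=
      continuous_const.mul Real.continuous_mul_log
    exact this.continuousOn.congr fun x _ => by ring
  · refine ContinuousOn.mul (by fun_prop) ?_
    intro x hx
    have hx1 : x + 1 ≠ 0 := by simp at hx; linarith [hx.1]
    have h2 : ContinuousAt (Real.log ∘ fun y : ℝ => y + 1) x :=
      ContinuousAt.comp (Real.continuousAt_log hx1) (continuousAt_id.add continuousAt_const)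
    exact h2.continuousWithinAt

lemma strictAntiOn_linG1 : StrictAntiOn linG1 (Set.Icc 0 1) := by
  refine strictAntiOn_of_deriv_neg (convex_Icc 0 1) contOn_linG1 ?_
  intro x hx
  rw [interior_Icc] at hx
  rw [(hasDerivAt_linG1 hx.1).deriv]
  exact linG2_neg hx.1 hx.2.le

/-- Tangent-line bound for `linG`, with equality iff `t = c`. -/
lemma linG_tangent {c t : ℝ} (hc0 : 0 < c) (hc1 : c ≤ 1) (ht0 : 0 ≤ t) (ht1 : t ≤ 1) :
    linG t ≤ linG c + linG1 c * (t - c) ∧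
      (linG t = linG c + linG1 c * (t - c) ↔ t = c) := by
  set F : ℝ → ℝ := fun s => linG c + linG1 c * (s - c) - linG s with hF
  have hFc : F c = 0 := by simp [hF]
  have hFd : ∀ x ∈ Set.Ioo (0 : ℝ) 1, HasDerivAt F (linG1 c - linG1 x) x := by
    intro x hx
    have h := ((((hasDerivAt_id x).sub_const c).const_mul (linG1 c)).const_add
      (linG c)).sub (hasDerivAt_linG hx.1)
    have he : linG1 c - linG1 x = linG1 c * 1 - linG1 x := by ring
    rw [he]
    exact h
  have hFcont : ContinuousOn F (Set.Icc 0 1) := by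
    refine ContinuousOn.sub ?_ contOn_linG
    fun_prop
  have hpos : ∀ x ∈ Set.Icc (0 : ℝ) 1, x ≠ c → 0 < F x := by
    intro x hx hne
    rcases lt_or_gt_of_ne hne with hlt | hgt
    · -- x < c : F strictly anti on [0,c]
      have hanti : StrictAntiOn F (Set.Icc 0 c) := by
        refine strictAntiOn_of_deriv_neg (convex_Icc 0 c)
          (hFcont.mono (Set.Icc_subset_Icc le_rfl hc1)) ?_
        intro y hy
        rw [interior_Icc] at hy
        have hy1 : y ∈ Set.Ioo (0 : ℝ) 1 := ⟨hy.1, lt_of_lt_of_le hy.2 hc1⟩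
        rw [(hFd y hy1).deriv]
        have := strictAntiOn_linG1 (Set.mem_Icc.mpr ⟨hy.1.le, hy1.2.le⟩)
          (Set.mem_Icc.mpr ⟨hc0.le, hc1⟩) hy.2
        linarith
      have := hanti (Set.mem_Icc.mpr ⟨hx.1, hlt.le⟩)
        (Set.mem_Icc.mpr ⟨hc0.le, le_rfl⟩) hlt
      rw [hFc] at this; linarith
    · -- c < x : F strictly mono on [c,1]
      have hmono : StrictMonoOn F (Set.Icc c 1) := by
        refine strictMonoOn_of_deriv_pos (convex_Icc c 1)
          (hFcont.mono (Set.Icc_subset_Icc hc0.le le_rfl)) ?_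
        intro y hy
        rw [interior_Icc] at hy
        have hy1 : y ∈ Set.Ioo (0 : ℝ) 1 := ⟨lt_trans hc0 hy.1, hy.2⟩
        rw [(hFd y hy1).deriv]
        have := strictAntiOn_linG1 (Set.mem_Icc.mpr ⟨hc0.le, hc1⟩)
          (Set.mem_Icc.mpr ⟨(lt_trans hc0 hy.1).le, hy.2.le⟩) hy.1
        linarith
      have := hmono (Set.mem_Icc.mpr ⟨le_rfl, hc1⟩)
        (Set.mem_Icc.mpr ⟨hgt.le, hx.2⟩) hgt
      rw [hFc] at this; linarith
  constructor
  · rcases eq_or_ne t c with h | h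
    · subst h; simp
    · have := hpos t ⟨ht0, ht1⟩ h
      simp only [hF] at this; linarith
  · constructor
    · intro h
      by_contra hne
      have := hpos t ⟨ht0, ht1⟩ hne
      simp only [hF] at this; linarith
    · intro h; subst h; ring

/-- Maximality: on a finite nonempty alphabet of size `N`, Lin entropy is at most that of
the uniform distribution, with equality iff the distribution is uniform. -/
theorem linEntropy_le_uniform
    {X : Type*} [Fintype X] [Nonempty X] (N : ℕ) (hN : Fintype.card X = N)
    (p : X → ℝ) (hp : ∀ x, 0 ≤ p x) (hsum : ∑ x, p x = 1) :
    linEntropy p ≤ linEntropy (fun _ : X => (1 : ℝ) / N) ∧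
      (linEntropy p = linEntropy (fun _ : X => (1 : ℝ) / N) ↔
        ∀ x, p x = 1 / N) := by
  have hNpos : 0 < N := hN ▸ Fintype.card_pos
  have hN1 : (1 : ℝ) ≤ (N : ℝ) := by exact_mod_cast hNpos
  set c : ℝ := 1 / (N : ℝ) with hc
  have hc0 : 0 < c := by positivity
  have hc1 : c ≤ 1 := by rw [hc, div_le_one (by linarith)]; exact hN1
  have hNc : (N : ℝ) * c = 1 := by
    rw [hc]; field_simp
  have hple : ∀ x, p x ≤ 1 := by
    intro x
    calc p x ≤ ∑ y, p y := Finset.single_le_sum (fun i _ => hp i) (Finset.mem_univ x)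
    _ = 1 := hsum
  have hEp : linEntropy p = ∑ x, linG (p x) :=
    Finset.sum_congr rfl fun x _ => linG_term_eq (hp x)
  have hEu : linEntropy (fun _ : X => (1 : ℝ) / N) = (N : ℝ) * linG c := by
    unfold linEntropy
    rw [Finset.sum_congr rfl fun x _ => linG_term_eq hc0.le]
    rw [Finset.sum_const, Finset.card_univ, hN, nsmul_eq_mul]
  have hTsum : ∑ x, (linG c + linG1 c * (p x - c)) = (N : ℝ) * linG c := by
    rw [Finset.sum_add_distrib, Finset.sum_const, Finset.card_univ, hN, nsmul_eq_mul,
      ← Finset.mul_sum, Finset.sum_sub_distrib, hsum, Finset.sum_const, Finset.card_univ, hN,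
      nsmul_eq_mul]
    rw [hNc]
    ring
  have htang := fun x => linG_tangent hc0 hc1 (hp x) (hple x)
  constructor
  · rw [hEp, hEu, ← hTsum]
    exact Finset.sum_le_sum fun x _ => (htang x).1
  · constructor
    · intro h
      rw [hEp, hEu, ← hTsum] at h
      have hzero : ∑ x, ((linG c + linG1 c * (p x - c)) - linG (p x)) = 0 := by
        rw [Finset.sum_sub_distrib, h, sub_self]
      have hterm := (Finset.sum_eq_zero_iff_of_nonneg
        (fun x _ => sub_nonneg.mpr (htang x).1)).mp hzero
      intro x
      have := hterm x (Finset.mem_univ x)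
      have heq : linG (p x) = linG c + linG1 c * (p x - c) := by linarith
      exact (htang x).2.mp heq
    · intro h
      have : p = fun _ : X => (1 : ℝ) / N := funext h
      rw [this]
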